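/- Let D be the brace on the free abelian group over symbols x_i, x_{ij}, x_{iij}, x_{ijk} with the stated multiplication. Then the generators satisfy: x_i ∗ x_j = x_{ij} for all 1≤i,j≤r; (x_i ∗ x_i) ∗ x_j = x_{iij} for all 1≤i,j≤r; and (x_i ∗ x_j) ∗ x_k = x_{ijk} for all 1≤i<j≤r, 1≤k≤r, where d ∗ e = d·e − d − e. Consequently D is generated as a brace by x_1,…,x_r. -/

import Mathlib

/-- Index set: symbols `x_i`, `x_{ij}`, `x_{iij}`, and `x_{ijk}` for `i < j`. -/
inductive Idx (r : ℕ) : Type where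
  | one : Fin r → Idx r
  | two : Fin r → Fin r → Idx r
  | dup : Fin r → Fin r → Idx r
  | three : (i j : Fin r) → i < j → Fin r → Idx r

/-- Since `Idx r` is finite, all integer-valued functions on it are finitely
supported, so `Idx r → ℤ` is the free abelian group on `Idx r` (pointwise `+`). -/
def dmul {r : ℕ} (d e : Idx r → ℤ) : Idx r → ℤ
  | .one i => d (.one i) + e (.one i)
  | .two i j => d (.two i j) + e (.two i j) + d (.one i) * e (.one j)
  | .dup i j => d (.dup i j) + e (.dup i j)
      + (d (.two i i) - d (.one i) * (d (.one i) - 1) / 2) * e (.one j)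
  | .three i j h k => d (.three i j h k) + e (.three i j h k)
      + (d (.two i j) - d (.one i) * d (.one j) + d (.two j i)) * e (.one k)

/-- The star operation of the brace `D`. -/
def dstar {r : ℕ} (d e : Idx r → ℤ) : Idx r → ℤ := dmul d e - d - e

open Classical in
/-- The basis element supported at index `α` with value `1`. -/
noncomputable def X {r : ℕ} (α : Idx r) : Idx r → ℤ := fun β => if β = α then 1 else 0


lemma lem1 {r : ℕ} (i j : Fin r) : dstar (X (Idx.one i)) (X (Idx.one j)) = X (Idx.two i j) := by
  funext β
  cases β <;> simp [dstar, dmul, X] <;> (try split_ifs <;> simp_all) <;> intros <;> omega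

lemma lem2 {r : ℕ} (i j : Fin r) :
    dstar (dstar (X (Idx.one i)) (X (Idx.one i))) (X (Idx.one j)) = X (Idx.dup i j) := by
  rw [lem1]
  funext β
  cases β <;> simp [dstar, dmul, X] <;> (try split_ifs <;> simp_all) <;> intros <;> omega

lemma lem3 {r : ℕ} (i j : Fin r) (h : i < j) (k : Fin r) :
    dstar (dstar (X (Idx.one i)) (X (Idx.one j))) (X (Idx.one k)) = X (Idx.three i j h k) := by
  rw [lem1]
  funext β
  have := h.ne
  cases β <;> simp [dstar, dmul, X] <;> (try split_ifs <;> simp_all) <;> intros <;> omega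

noncomputable instance {r : ℕ} : DecidableEq (Idx r) := Classical.decEq _

noncomputable instance {r : ℕ} : Fintype (Idx r) := by
  classical
  exact Fintype.ofSurjective
    (f := fun p : (Fin r ⊕ Fin r × Fin r ⊕ Fin r × Fin r ⊕ Fin r × Fin r × Fin r) =>
      match p with
      | .inl i => Idx.one i
      | .inr (.inl (i, j)) => Idx.two i j
      | .inr (.inr (.inl (i, j))) => Idx.dup i j
      | .inr (.inr (.inr (i, j, k))) =>
          if h : i < j then Idx.three i j h k else Idx.one i)
    (by
      rintro (i | ⟨i,j⟩ | ⟨i,j⟩ | ⟨i,j,h,k⟩)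
      · exact ⟨.inl i, rfl⟩
      · exact ⟨.inr (.inl (i, j)), rfl⟩
      · exact ⟨.inr (.inr (.inl (i, j))), rfl⟩
      · exact ⟨.inr (.inr (.inr (i, j, k))), by simp [h]⟩)

lemma decomp {r : ℕ} (d : Idx r → ℤ) : d = ∑ α : Idx r, d α • X α := by
  funext β
  simp [X]

theorem stmt19 {r : ℕ} :
    (∀ i j : Fin r, dstar (X (Idx.one i)) (X (Idx.one j)) = X (Idx.two i j))
    ∧ (∀ i j : Fin r,
        dstar (dstar (X (Idx.one i)) (X (Idx.one i))) (X (Idx.one j)) = X (Idx.dup i j))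
    ∧ (∀ (i j : Fin r) (h : i < j) (k : Fin r),
        dstar (dstar (X (Idx.one i)) (X (Idx.one j))) (X (Idx.one k)) = X (Idx.three i j h k))
    ∧ (∀ S : Set (Idx r → ℤ), (0 : Idx r → ℤ) ∈ S →
        (∀ x ∈ S, ∀ y ∈ S, x + y ∈ S) → (∀ x ∈ S, -x ∈ S) →
        (∀ x ∈ S, ∀ y ∈ S, dmul x y ∈ S) →
        (∀ x ∈ S, ∀ y, dmul x y = 0 → y ∈ S) →
        (∀ i : Fin r, X (Idx.one i) ∈ S) →
        ∀ d : Idx r → ℤ, d ∈ S) := by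
  refine ⟨lem1, lem2, lem3, ?_⟩
  intro S h0 hadd hneg hmul _ hgen d
  have hsub : ∀ x ∈ S, ∀ y ∈ S, x - y ∈ S := fun x hx y hy => by
    simpa [sub_eq_add_neg] using hadd x hx (-y) (hneg y hy)
  have hstar : ∀ x ∈ S, ∀ y ∈ S, dstar x y ∈ S := fun x hx y hy =>
    hsub _ (hsub _ (hmul x hx y hy) x hx) y hy
  have hX : ∀ α : Idx r, X α ∈ S := by
    rintro (i | ⟨i,j⟩ | ⟨i,j⟩ | ⟨i,j,h,k⟩)
    · exact hgen i
    · rw [← lem1 i j]; exact hstar _ (hgen i) _ (hgen j)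
    · rw [← lem2 i j]; exact hstar _ (hstar _ (hgen i) _ (hgen i)) _ (hgen j)
    · rw [← lem3 i j h k]; exact hstar _ (hstar _ (hgen i) _ (hgen j)) _ (hgen k)
  have hsmul : ∀ n : ℤ, ∀ x ∈ S, n • x ∈ S := by
    intro n x hx
    induction n using Int.induction_on with
    | zero => simpa using h0
    | succ k ih => rw [add_smul, one_smul]; exact hadd _ ih _ hx
    | pred k ih => rw [sub_smul, one_smul, sub_eq_add_neg]; exact hadd _ ih _ (hneg x hx)
  rw [decomp d]
  exact Finset.sum_induction _ (· ∈ S) (fun a b ha hb => hadd a ha b hb) h0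
    (fun α _ => hsmul (d α) (X α) (hX α))
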